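/- arXiv:2510.02147 — 3 statements merged into one kernel-verified Lean document; each statement's English description precedes it below -/
import Mathlib

section
/- Let p be an odd prime, η ∈ {+1, −1}, n ≥ 1 an integer, let R₀ be a commutative ring, and let R be a commutative R₀-algebra containing an element i with i² = −1. Write c := η·(−1)^{(p−1)/2} ∈ {+1, −1} and let s := 1 if c = 1 and s := i if c = −1. Then there is an isomorphism of R-algebras R ⊗_{R₀} T^η_{n,R₀} ≅ T_{n,R} sending 1 ⊗ ξ_r to c^{r+1}·s·τ_r for every 1 ≤ r ≤ n−1 (equivalently, sending c^r·s ⊗ ξ_r to τ_r). -/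
/-!
Statement 1: For an odd prime `p`, a sign `η ∈ {1, -1}`, `n ≥ 1`, a commutative ring `R₀` and a
commutative `R₀`-algebra `R` containing a square root `im` of `-1`, write
`c₀ := η·(-1)^((p-1)/2) ∈ R₀`, let `c` be the image of `c₀` in `R`, and let `s := 1` if `c = 1`
and `s := im` if `c = -1`.  Then there is an `R`-algebra isomorphism
`R ⊗_{R₀} T^η_{n,R₀} ≅ T_{n,R}` sending `1 ⊗ ξ_r` to `c^(r+1)·s·τ_r` for `1 ≤ r ≤ n-1`.

Both twisted group algebras are realised as quotients of the free algebra on `n - 1` generators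
(indexed by `Fin (n-1)`, where `i : Fin (n-1)` corresponds to the classical 1-based label
`r = i + 1`) by the defining relations, `T^η_{n,R₀}` with parameter `c₀ = η(-1)^((p-1)/2)`
and `T_{n,R}` with parameter `1`.
-/

open FreeAlgebra TensorProduct

/-- The defining relations of the twisted group algebra of `S_n` with parameter `c`:
`τ_r² = c`, `τ_r τ_s = -τ_s τ_r` for `|r - s| > 1`, and `(τ_r τ_{r+1})³ = 1`. -/
inductive TwistedGroupRel (R : Type*) [CommRing R] (n : ℕ) (c : R) :
    FreeAlgebra R (Fin (n - 1)) → FreeAlgebra R (Fin (n - 1)) → Prop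
  | square (r : Fin (n - 1)) :
      TwistedGroupRel R n c (ι R r * ι R r) (algebraMap R (FreeAlgebra R (Fin (n - 1))) c)
  | far_comm (r s : Fin (n - 1)) (h : (r : ℕ) + 1 < (s : ℕ) ∨ (s : ℕ) + 1 < (r : ℕ)) :
      TwistedGroupRel R n c (ι R r * ι R s) (-(ι R s * ι R r))
  | braid (r s : Fin (n - 1)) (h : (s : ℕ) = (r : ℕ) + 1) :
      TwistedGroupRel R n c ((ι R r * ι R s) ^ 3) 1

/-- The twisted group algebra of `S_n` over `R` with parameter `c`.  For `c = 1` this is the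
twisted group algebra `T_{n,R}`; for `c = η(-1)^((p-1)/2)` it is the `η`-twisted group
algebra `T^η_{n,R}`. -/
abbrev TwistedGroupAlgebra (R : Type*) [CommRing R] (n : ℕ) (c : R) :=
  RingQuot (TwistedGroupRel R n c)

/-- The generator of the twisted group algebra indexed by `r : Fin (n-1)`
(classically, the generator `τ_{r+1}`). -/
noncomputable def twistedGen (R : Type*) [CommRing R] (n : ℕ) (c : R) (r : Fin (n - 1)) :
    TwistedGroupAlgebra R n c :=
  RingQuot.mkAlgHom R (TwistedGroupRel R n c) (ι R r)

lemma twistedGen_mul_self (R : Type*) [CommRing R] (n : ℕ) (c : R) (r : Fin (n - 1)) :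
    twistedGen R n c r * twistedGen R n c r = algebraMap R _ c := by
  simp only [twistedGen]
  rw [← map_mul,
    RingQuot.mkAlgHom_rel R (TwistedGroupRel.square r), AlgHom.commutes]

lemma twistedGen_far (R : Type*) [CommRing R] (n : ℕ) (c : R) (r s : Fin (n - 1))
    (h : (r : ℕ) + 1 < (s : ℕ) ∨ (s : ℕ) + 1 < (r : ℕ)) :
    twistedGen R n c r * twistedGen R n c s = -(twistedGen R n c s * twistedGen R n c r) := by
  simp only [twistedGen]
  rw [← map_mul,
    RingQuot.mkAlgHom_rel R (TwistedGroupRel.far_comm r s h), map_neg, map_mul]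

lemma twistedGen_braid (R : Type*) [CommRing R] (n : ℕ) (c : R) (r s : Fin (n - 1))
    (h : (s : ℕ) = (r : ℕ) + 1) :
    (twistedGen R n c r * twistedGen R n c s) ^ 3 = 1 := by
  simp only [twistedGen]
  rw [← map_mul, ← map_pow,
    RingQuot.mkAlgHom_rel R (TwistedGroupRel.braid r s h), map_one]

theorem statement1 (p : ℕ) (hp : p.Prime) (hp_odd : Odd p)
    (R₀ : Type*) [CommRing R₀] (R : Type*) [CommRing R] [Algebra R₀ R]
    (im : R) (him : im ^ 2 = -1)
    (η : R₀) (hη : η = 1 ∨ η = -1) (n : ℕ) (hn : 1 ≤ n)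
    (c₀ : R₀) (hc₀ : c₀ = η * (-1) ^ ((p - 1) / 2))
    (c : R) (hc : c = algebraMap R₀ R c₀)
    (s : R) (hs_pos : c = 1 → s = 1) (hs_neg : c = -1 → s = im) :
    ∃ e : (R ⊗[R₀] TwistedGroupAlgebra R₀ n c₀) ≃ₐ[R] TwistedGroupAlgebra R n 1,
      ∀ r : Fin (n - 1),
        e ((1 : R) ⊗ₜ[R₀] twistedGen R₀ n c₀ r)
          = (c ^ ((r : ℕ) + 2) * s) • twistedGen R n 1 r := by
  classical
  -- scalar facts
  have hc₀1 : c₀ = 1 ∨ c₀ = -1 := by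
    rcases neg_one_pow_eq_or R₀ ((p - 1) / 2) with h | h <;>
      rcases hη with h' | h' <;> simp [hc₀, h, h']
  have hc1 : c = 1 ∨ c = -1 := by
    rcases hc₀1 with h | h
    · left; simp [hc, h]
    · right; simp [hc, h]
  have hcc : c * c = 1 := by rcases hc1 with h | h <;> rw [h] <;> ring
  have hss : s * s = c := by
    rcases hc1 with h | h
    · rw [hs_pos h, h]; ring
    · rw [hs_neg h, ← sq, him, h]
  have hcpow : ∀ k : ℕ, c ^ k * c ^ k = 1 := fun k => by
    rw [← mul_pow, hcc, one_pow]
  have hsq : ∀ k : ℕ, (c ^ k * s) * (c ^ k * s) = c := fun k => by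
    have h : (c ^ k * s) * (c ^ k * s) = (c ^ k * c ^ k) * (s * s) := by ring
    rw [h, hcpow, hss, one_mul]
  have hkey : ∀ k : ℕ, (c ^ k * s) * (c ^ (k + 1) * s) = 1 := fun k => by
    have h : (c ^ k * s) * (c ^ (k + 1) * s) = (c ^ k * c ^ k) * (c * (s * s)) := by ring
    rw [h, hcpow, hss, hcc, one_mul]
  -- the forward map on the free algebra
  set T := TwistedGroupAlgebra R n 1 with hT
  set T₀ := TwistedGroupAlgebra R₀ n c₀ with hT₀
  set t : Fin (n - 1) → T := twistedGen R n 1 with ht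
  set u : Fin (n - 1) → T₀ := twistedGen R₀ n c₀ with hu
  have t_sq : ∀ i, t i * t i = 1 := fun i => by
    rw [ht, twistedGen_mul_self, map_one]
  set f : FreeAlgebra R₀ (Fin (n - 1)) →ₐ[R₀] T :=
    FreeAlgebra.lift R₀ (fun i => (c ^ ((i : ℕ) + 2) * s) • t i) with hf
  have hfrel : ∀ ⦃x y⦄, TwistedGroupRel R₀ n c₀ x y → f x = f y := by
    intro x y h
    induction h with
    | square i =>
        rw [map_mul, hf, FreeAlgebra.lift_ι_apply, AlgHom.commutes,
          smul_mul_smul_comm, t_sq, hsq, IsScalarTower.algebraMap_apply R₀ R T, ← hc,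
          Algebra.algebraMap_eq_smul_one]
    | far_comm i j h =>
        rw [map_mul, map_neg, map_mul, hf, FreeAlgebra.lift_ι_apply,
          FreeAlgebra.lift_ι_apply, smul_mul_smul_comm, smul_mul_smul_comm,
          twistedGen_far R n 1 i j h, smul_neg,
          mul_comm (c ^ ((i : ℕ) + 2) * s)]
    | braid i j h =>
        have hj : (j : ℕ) + 2 = ((i : ℕ) + 2) + 1 := by omega
        rw [map_pow, map_mul, map_one, hf, FreeAlgebra.lift_ι_apply,
          FreeAlgebra.lift_ι_apply, smul_mul_smul_comm, smul_pow,
          twistedGen_braid R n 1 i j h, hj, hkey, one_pow, one_smul]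
  set F : T₀ →ₐ[R₀] T := RingQuot.liftAlgHom R₀ ⟨f, hfrel⟩ with hF
  have hcomm : ∀ (x : R) (y : T₀), Commute ((Algebra.ofId R T) x) (F y) := fun x y => by
    simpa [Algebra.ofId_apply, Commute, SemiconjBy] using (Algebra.commutes x (F y))
  set e₁ : (R ⊗[R₀] T₀) →ₐ[R] T := Algebra.TensorProduct.lift (Algebra.ofId R T) F hcomm
    with he₁
  have he₁u : ∀ i, e₁ ((1 : R) ⊗ₜ[R₀] u i) = (c ^ ((i : ℕ) + 2) * s) • t i := fun i => by
    rw [he₁, Algebra.TensorProduct.lift_tmul, map_one, one_mul, hu, hF, twistedGen,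
      RingQuot.liftAlgHom_mkAlgHom_apply, hf, FreeAlgebra.lift_ι_apply]
  -- the backward map
  set g : FreeAlgebra R (Fin (n - 1)) →ₐ[R] R ⊗[R₀] T₀ :=
    FreeAlgebra.lift R (fun i => (c ^ ((i : ℕ) + 3) * s) • ((1 : R) ⊗ₜ[R₀] u i)) with hg
  have u_sq : ∀ i, ((1 : R) ⊗ₜ[R₀] u i) * ((1 : R) ⊗ₜ[R₀] u i) = c • (1 : R ⊗[R₀] T₀) :=
    fun i => by
      rw [Algebra.TensorProduct.tmul_mul_tmul, one_mul, hu, twistedGen_mul_self,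
        Algebra.algebraMap_eq_smul_one, tmul_smul, hc, algebraMap_smul]
      rfl
  have hgrel : ∀ ⦃x y⦄, TwistedGroupRel R n 1 x y → g x = g y := by
    intro x y h
    induction h with
    | square i =>
        rw [map_mul, hg, FreeAlgebra.lift_ι_apply, AlgHom.commutes, map_one,
          smul_mul_smul_comm, u_sq, hsq, smul_smul, hcc, one_smul]
    | far_comm i j h =>
        have hfar : ((1 : R) ⊗ₜ[R₀] u i) * ((1 : R) ⊗ₜ[R₀] u j)
            = -(((1 : R) ⊗ₜ[R₀] u j) * ((1 : R) ⊗ₜ[R₀] u i)) := by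
          simp only [Algebra.TensorProduct.tmul_mul_tmul, one_mul, hu,
            twistedGen_far R₀ n c₀ i j h, TensorProduct.tmul_neg]
        rw [map_mul, map_neg, map_mul, hg, FreeAlgebra.lift_ι_apply,
          FreeAlgebra.lift_ι_apply, smul_mul_smul_comm, smul_mul_smul_comm, hfar, smul_neg,
          mul_comm (c ^ ((i : ℕ) + 3) * s)]
    | braid i j h =>
        have hj : (j : ℕ) + 3 = ((i : ℕ) + 3) + 1 := by omega
        have hbr : (((1 : R) ⊗ₜ[R₀] u i) * ((1 : R) ⊗ₜ[R₀] u j)) ^ 3 = 1 := by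
          rw [Algebra.TensorProduct.tmul_mul_tmul, one_mul]
          rw [show ((1 : R) ⊗ₜ[R₀] (u i * u j)) ^ 3 = (1 : R) ⊗ₜ[R₀] ((u i * u j) ^ 3) by
            simp [pow_succ, Algebra.TensorProduct.tmul_mul_tmul]]
          rw [hu, twistedGen_braid R₀ n c₀ i j h]
          rfl
        rw [map_pow, map_mul, map_one, hg, FreeAlgebra.lift_ι_apply,
          FreeAlgebra.lift_ι_apply, smul_mul_smul_comm, smul_pow, hbr, hj, hkey,
          one_pow, one_smul]
  set e₂ : T →ₐ[R] R ⊗[R₀] T₀ := RingQuot.liftAlgHom R ⟨g, hgrel⟩ with he₂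
  have he₂t : ∀ i, e₂ (t i) = (c ^ ((i : ℕ) + 3) * s) • ((1 : R) ⊗ₜ[R₀] u i) := fun i => by
    rw [he₂, ht, twistedGen, RingQuot.liftAlgHom_mkAlgHom_apply, hg, FreeAlgebra.lift_ι_apply]
  have h₁ : e₁.comp e₂ = AlgHom.id R T := by
    apply RingQuot.ringQuot_ext'
    apply FreeAlgebra.hom_ext
    funext i
    show e₁ (e₂ ((RingQuot.mkAlgHom R (TwistedGroupRel R n 1)) (ι R i)))
        = (RingQuot.mkAlgHom R (TwistedGroupRel R n 1)) (ι R i)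
    rw [← twistedGen, ← ht, he₂t, map_smul, he₁u, smul_smul, mul_comm, hkey, one_smul]
  have h₂ : e₂.comp e₁ = AlgHom.id R (R ⊗[R₀] T₀) := by
    apply Algebra.TensorProduct.ext
    · exact Subsingleton.elim _ _
    · apply RingQuot.ringQuot_ext'
      apply FreeAlgebra.hom_ext
      funext i
      show e₂ (e₁ ((1 : R) ⊗ₜ[R₀] (RingQuot.mkAlgHom R₀ (TwistedGroupRel R₀ n c₀)) (ι R₀ i)))
          = (1 : R) ⊗ₜ[R₀] (RingQuot.mkAlgHom R₀ (TwistedGroupRel R₀ n c₀)) (ι R₀ i)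
      rw [← twistedGen, ← hu, he₁u, map_smul, he₂t, smul_smul, hkey, one_smul]
  refine ⟨AlgEquiv.ofAlgHom e₁ e₂ h₁ h₂, fun r => ?_⟩
  simpa using he₁u r
end

section
/- Let p be a prime number, let O be a discrete valuation ring whose field of fractions K has characteristic 0 and whose residue field has characteristic p, and let G be a finite group. Let b = Σ_{g ∈ G} b_g·g be a central idempotent of the group algebra O[G], and suppose that the character of the K[G]-module K[G]b is rational-valued, i.e. for every g ∈ G the trace of the K-linear endomorphism x ↦ gx of the finite-dimensional K-vector space K[G]b lies in the image of ℚ in K. Then every coefficient b_g lies in the image of ℤ_{(p)} (the localization of ℤ at the prime p) under the inclusion ℚ ⊆ K; that is, b ∈ ℤ_{(p)}[G]. -/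
/-!
Statement 6: Let `p` be a prime, `O` a discrete valuation ring whose field of fractions `K`
has characteristic `0` and whose residue field has characteristic `p`, and `G` a finite group.
If `b` is a central idempotent of `O[G]` such that the character of the `K[G]`-module `K[G]b`
(left multiplication on the right ideal `K[G]·b`) is rational valued, then every coefficient
of `b` lies in the image of `ℤ_(p) ⊆ ℚ` in `K`, i.e. it is the image of a rational number
whose denominator is prime to `p`.
-/


theorem myMapRangeMul {O K G : Type*} [CommRing O] [Field K] [Group G] (f : O →+* K)
    (a b : MonoidAlgebra O G) (aK bK : MonoidAlgebra K G)
    (ha : aK = MonoidAlgebra.ofCoeff (Finsupp.mapRange f f.map_zero a.coeff))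
    (hb : bK = MonoidAlgebra.ofCoeff (Finsupp.mapRange f f.map_zero b.coeff)) :
    (MonoidAlgebra.ofCoeff (Finsupp.mapRange f f.map_zero (a*b).coeff) : MonoidAlgebra K G)
      = aK * bK := by
  classical
  subst ha hb
  exact map_mul (MonoidAlgebra.mapRingHom (M := G) f) a b

theorem myDenLemma (p : ℕ) (hp : p.Prime)
    {O : Type*} [CommRing O] [IsDomain O] [IsDiscreteValuationRing O]
    {K : Type*} [Field K] [CharZero K] [Algebra O K] [IsFractionRing O K]
    (hres : CharP (IsLocalRing.ResidueField O) p)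
    (x : O) (q : ℚ) (h : algebraMap O K x = (q : K)) : ¬ p ∣ q.den := by
  intro hdvd
  have hdenK : ((q.den : ℕ) : K) ≠ 0 := Nat.cast_ne_zero.mpr q.den_nz
  have hq : (q : K) * (q.den : K) = (q.num : K) := by
    rw [Rat.cast_def]
    field_simp
  have hK : algebraMap O K (x * ((q.den : ℕ) : O)) = algebraMap O K (((q.num : ℤ) : O)) := by
    rw [map_mul, map_natCast, map_intCast, h, hq]
  have hO : x * ((q.den : ℕ) : O) = ((q.num : ℤ) : O) := IsFractionRing.injective O K hK
  have hres0 : ((q.num : ℤ) : IsLocalRing.ResidueField O) = 0 := by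
    have := congrArg (IsLocalRing.residue O) hO
    rw [map_mul, map_natCast, map_intCast] at this
    rw [← this, (CharP.cast_eq_zero_iff (IsLocalRing.ResidueField O) p q.den).mpr hdvd,
      mul_zero]
  have hnum : (p : ℤ) ∣ q.num :=
    (CharP.intCast_eq_zero_iff (IsLocalRing.ResidueField O) p q.num).mp hres0
  have hnum' : p ∣ q.num.natAbs := by
    have := Int.natAbs_dvd_natAbs.mpr hnum
    simpa using this
  have : p ∣ Nat.gcd q.num.natAbs q.den := Nat.dvd_gcd hnum' hdvd
  rw [q.reduced] at this
  exact hp.ne_one (Nat.dvd_one.mp this)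

/-- Left multiplication by the group element `g` on the right ideal `K[G]·bK`,
as a `K`-linear endomorphism. -/
noncomputable def leftMulOnIdeal (K : Type*) [Field K] (G : Type*) [Group G]
    (bK : MonoidAlgebra K G) (g : G) :
    LinearMap.range (LinearMap.mulRight K bK) →ₗ[K]
      LinearMap.range (LinearMap.mulRight K bK) :=
  (LinearMap.mulLeft K (MonoidAlgebra.of K G g)).restrict (fun x hx => by
    rcases LinearMap.mem_range.mp hx with ⟨y, rfl⟩
    exact LinearMap.mem_range.mpr ⟨MonoidAlgebra.of K G g * y, by simp [mul_assoc]⟩)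

theorem myTraceFormula {K G : Type*} [Field K] [Group G] [Fintype G]
    (e : MonoidAlgebra K G) (he : e * e = e) (g : G) :
    LinearMap.trace K (LinearMap.range (LinearMap.mulRight K e))
      (leftMulOnIdeal K G e g)
      = ∑ h : G, e.coeff (h⁻¹ * (g⁻¹ * h)) := by
  classical
  set M := LinearMap.range (LinearMap.mulRight K e)
  set F : MonoidAlgebra K G →ₗ[K] MonoidAlgebra K G :=
    (LinearMap.mulLeft K (MonoidAlgebra.of K G g)).comp (LinearMap.mulRight K e) with hF
  have hFmem : ∀ x, F x ∈ M := fun x =>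
    LinearMap.mem_range.mpr ⟨MonoidAlgebra.of K G g * x, by simp [hF, mul_assoc]⟩
  let bb : Module.Basis G K (MonoidAlgebra K G) := MonoidAlgebra.basis G K
  haveI : Module.Finite K (MonoidAlgebra K G) := Module.Finite.of_basis bb
  haveI : Module.Free K (MonoidAlgebra K G) := Module.Free.of_basis bb
  have key := LinearMap.trace_restrict_eq_of_forall_mem M F hFmem
  have hrestr : F.restrict (fun x _ => hFmem x) = leftMulOnIdeal K G e g := by
    apply LinearMap.ext
    rintro ⟨x, hx⟩
    rcases LinearMap.mem_range.mp hx with ⟨y, rfl⟩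
    apply Subtype.ext
    show MonoidAlgebra.of K G g * (y * e * e) = MonoidAlgebra.of K G g * (y * e)
    rw [mul_assoc y e e, he]
  rw [← hrestr, key]
  rw [LinearMap.trace_eq_matrix_trace K bb]
  rw [Matrix.trace]
  refine Finset.sum_congr rfl fun h _ => ?_
  rw [Matrix.diag_apply, LinearMap.toMatrix_apply]
  show (F (MonoidAlgebra.single h 1)).coeff h = _
  have hFh : F (MonoidAlgebra.single h 1) =
      MonoidAlgebra.of K G g * ((MonoidAlgebra.single h 1 : MonoidAlgebra K G) * e) := rfl
  rw [hFh, MonoidAlgebra.of_apply]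
  rw [MonoidAlgebra.coeff_single_mul_apply, MonoidAlgebra.coeff_single_mul_apply, one_mul, one_mul]

theorem statement6 (p : ℕ) (hp : p.Prime)
    (O : Type*) [CommRing O] [IsDomain O] [IsDiscreteValuationRing O]
    (K : Type*) [Field K] [CharZero K] [Algebra O K] [IsFractionRing O K]
    (hres : CharP (IsLocalRing.ResidueField O) p)
    (G : Type*) [Group G] [Fintype G]
    (b : MonoidAlgebra O G)
    (hb_central : b ∈ Subring.center (MonoidAlgebra O G))
    (hb_idem : b * b = b)
    -- `bK` is the image of `b` in `K[G]` (coefficientwise)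
    (bK : MonoidAlgebra K G)
    (hbK : bK = MonoidAlgebra.ofCoeff (Finsupp.mapRange (algebraMap O K) (map_zero _) b.coeff))
    -- the character of `K[G]b` is rational valued: for every `g ∈ G` the trace of left
    -- multiplication by `g` on `K[G]·bK` lies in the image of `ℚ` in `K`
    (hχ : ∀ g : G, ∃ q : ℚ,
        LinearMap.trace K (LinearMap.range (LinearMap.mulRight K bK))
          (leftMulOnIdeal K G bK g) = (q : K)) :
    ∀ g : G, ∃ q : ℚ, ¬ (p ∣ q.den) ∧ algebraMap O K (b.coeff g) = (q : K) := by
  intro g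
  -- bK is idempotent
  have heK : bK * bK = bK := by
    rw [hbK, ← myMapRangeMul (algebraMap O K) b b _ _ rfl rfl, hb_idem]
  -- coefficients of b are conjugation invariant
  have hcen : ∀ (h y : G), b.coeff (h⁻¹ * y) = b.coeff (y * h⁻¹) := by
    intro h y
    have hc := (Subring.mem_center_iff.mp hb_central) (MonoidAlgebra.single h 1)
    have := congrArg (fun z : MonoidAlgebra O G => z.coeff y) hc
    rw [MonoidAlgebra.coeff_single_mul_apply, MonoidAlgebra.coeff_mul_single_apply, one_mul, mul_one] at this
    exact this
  -- the trace formula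
  obtain ⟨q, hq⟩ := hχ g⁻¹
  rw [myTraceFormula bK heK g⁻¹] at hq
  have hsum : ∑ h : G, bK.coeff (h⁻¹ * (g⁻¹⁻¹ * h)) = (Fintype.card G : K) * algebraMap O K (b.coeff g) := by
    have : ∀ h : G, bK.coeff (h⁻¹ * (g⁻¹⁻¹ * h)) = algebraMap O K (b.coeff g) := by
      intro h
      rw [hbK, MonoidAlgebra.coeff_ofCoeff, Finsupp.mapRange_apply, inv_inv, hcen h (g * h)]
      congr 2
      group
    rw [Finset.sum_congr rfl fun h _ => this h, Finset.sum_const, Finset.card_univ,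
      nsmul_eq_mul]
  rw [hsum] at hq
  have hcard : ((Fintype.card G : ℚ) : K) ≠ 0 := by
    rw [Rat.cast_natCast]
    exact Nat.cast_ne_zero.mpr Fintype.card_ne_zero
  refine ⟨q / (Fintype.card G : ℚ), ?_, ?_⟩
  · refine myDenLemma p hp (K := K) hres (b.coeff g) _ ?_
    rw [Rat.cast_div, Rat.cast_natCast, ← hq]
    rw [Rat.cast_natCast] at hcard
    field_simp
  · rw [Rat.cast_div, Rat.cast_natCast, ← hq]
    rw [Rat.cast_natCast] at hcard
    field_simp
end

section
/- Let R be a commutative ring and R' a commutative R-algebra. Let A be an R-algebra, A₀ ⊆ A an R-subalgebra, and u ∈ A a unit such that A = A₀ ⊕ A₀u as R-modules, u·A₀ = A₀·u, and u² ∈ A₀ (so that A is a ℤ/2-graded R-algebra with even part A₀ and odd part A₀u, and u is an odd unit). Set A' := R' ⊗_R A, let A'₀ denote the image of R' ⊗_R A₀ in A' (so A'₀ ≅ R' ⊗_R A₀, since A₀ is an R-module direct summand of A), and set u' := 1 ⊗ u ∈ A'. Let U' be an A'-module equipped with A'₀-submodules U'₀ and U'₁ such that U' = U'₀ ⊕ U'₁,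 u'·U'₀ ⊆ U'₁, and u'·U'₁ ⊆ U'₀. If there exists an A₀-module U₀ and an isomorphism of A'₀-modules U'₀ ≅ R' ⊗_R U₀, then there exist an A-module U, A₀-submodules V₀ and V₁ of U with U = V₀ ⊕ V₁, u·V₀ ⊆ V₁ and u·V₁ ⊆ V₀, and an isomorphism of A'-modules R' ⊗_R U ≅ U' carrying the image of R' ⊗_R V₀ onto U'₀ and the image of R' ⊗_R V₁ onto U'₁. -/
/-!
Statement 7 (descent of supermodules along the even part): Let `R` be a commutative ring and
`R'` a commutative `R`-algebra.  Let `A` be an `R`-algebra with an `R`-subalgebra `A₀` and a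
unit `u` such that `A = A₀ ⊕ A₀u` as `R`-modules, `u·A₀ = A₀·u` and `u² ∈ A₀` (so `A` is a
superalgebra with even part `A₀` and odd unit `u`).  Set `A' := R' ⊗[R] A`, `A'₀ :=` the image
of `R' ⊗ A₀` in `A'`, and `u' := 1 ⊗ u`.  Let `U'` be an `A'`-module with `A'₀`-submodules
`U'₀, U'₁` such that `U' = U'₀ ⊕ U'₁`, `u'·U'₀ ⊆ U'₁` and `u'·U'₁ ⊆ U'₀`.  If `U'₀` descends
to `R` as an `A₀`-module, then `U'` descends to `R` as an `A`-supermodule, compatibly with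
the gradings.

An isomorphism of `A'`-modules `R' ⊗[R] U ≅ U'` is encoded as an `R'`-linear equivalence `g`
satisfying `g((x·y) ⊗ (a•v)) = (x ⊗ a) • g(y ⊗ v)`, which (by linearity) is exactly
`A'`-linearity of `g` for the canonical `A' = R' ⊗ A` module structure on `R' ⊗ U`;
similarly for `A'₀`-linearity of the isomorphism `R' ⊗ U₀ ≅ U'₀`.
-/

open TensorProduct

/-- A bundle consisting of a module over the subalgebra `A₀` (an "`A₀`-module"),
together with its underlying compatible `R`-module structure. -/
structure ModuleOverWitness (R : Type) [CommRing R] {A : Type} [Ring A] [Algebra R A]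
    (A₀ : Subalgebra R A) : Type 1 where
  carrier : Type
  [addCommGroup : AddCommGroup carrier]
  [moduleR : Module R carrier]
  [moduleA₀ : Module A₀ carrier]
  [tower : IsScalarTower R A₀ carrier]

attribute [instance] ModuleOverWitness.addCommGroup ModuleOverWitness.moduleR
  ModuleOverWitness.moduleA₀ ModuleOverWitness.tower

/-- A bundle consisting of an `A`-module together with its underlying compatible
`R`-module structure. -/
structure ModuleWitness (R : Type) [CommRing R] (A : Type) [Ring A] [Algebra R A] :
    Type 1 where
  carrier : Type
  [addCommGroup : AddCommGroup carrier]
  [moduleR : Module R carrier]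
  [moduleA : Module A carrier]
  [tower : IsScalarTower R A carrier]

attribute [instance] ModuleWitness.addCommGroup ModuleWitness.moduleR
  ModuleWitness.moduleA ModuleWitness.tower

namespace S7
variable {R : Type} [CommRing R] {A : Type} [Ring A] [Algebra R A]
  {A₀ : Subalgebra R A} {u : Aˣ}

section conj
variable (hsw : (Subalgebra.toSubmodule A₀).map (LinearMap.mulLeft R (u : A))
      = (Subalgebra.toSubmodule A₀).map (LinearMap.mulRight R (u : A)))
include hsw

lemma mem_conj (x : A₀) : ((u⁻¹ : Aˣ) : A) * (x : A) * (u : A) ∈ A₀ := by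
  have hx : (x : A) * (u : A) ∈ (Subalgebra.toSubmodule A₀).map (LinearMap.mulLeft R (u : A)) := by
    rw [hsw]; exact ⟨x, x.2, rfl⟩
  obtain ⟨y, hy, h⟩ := hx
  have h' : (u : A) * y = (x : A) * (u : A) := h
  have : ((u⁻¹ : Aˣ) : A) * (x : A) * (u : A) = y := by
    rw [mul_assoc, ← h', ← mul_assoc, Units.inv_mul, one_mul]
  rw [this]; exact hy

/-- conjugation by `u` on `A₀`. -/
noncomputable def cj (x : A₀) : A₀ := ⟨((u⁻¹ : Aˣ) : A) * (x : A) * (u : A), mem_conj hsw x⟩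

lemma cj_coe (x : A₀) : (cj hsw x : A) = ((u⁻¹ : Aˣ) : A) * (x : A) * (u : A) := rfl

lemma u_mul_cj (x : A₀) : (u : A) * (cj hsw x : A) = (x : A) * (u : A) := by
  rw [cj_coe, ← mul_assoc, ← mul_assoc, Units.mul_inv, one_mul]

lemma cj_add (x y : A₀) : cj hsw (x + y) = cj hsw x + cj hsw y := by
  apply Subtype.ext
  push_cast [cj_coe]; noncomm_ring

lemma cj_mul (x y : A₀) : cj hsw (x * y) = cj hsw x * cj hsw y := by
  apply Subtype.ext
  push_cast [cj_coe]
  have h1 : ((u : A)) * (((u⁻¹ : Aˣ) : A)) = 1 := Units.mul_inv u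
  calc ((u⁻¹ : Aˣ) : A) * ((x : A) * y) * u
      = ((u⁻¹ : Aˣ) : A) * (x : A) * ((((u : A)) * (((u⁻¹ : Aˣ) : A)))) * ((y : A) * u) := by
        rw [h1]; noncomm_ring
    _ = ((u⁻¹ : Aˣ) : A) * (x : A) * u * (((u⁻¹ : Aˣ) : A) * (y : A) * u) := by noncomm_ring

lemma cj_one : cj hsw (1 : A₀) = 1 := by
  apply Subtype.ext
  push_cast [cj_coe]
  rw [mul_one, Units.inv_mul]

lemma cj_smul (r : R) (x : A₀) : cj hsw (r • x) = r • cj hsw x := by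
  apply Subtype.ext
  push_cast [cj_coe]
  rw [mul_smul_comm, smul_mul_assoc]

lemma cj_zero : cj hsw (0 : A₀) = 0 := by
  apply Subtype.ext; push_cast [cj_coe]; rw [mul_zero, zero_mul]

end conj


section proj
variable (hsw : (Subalgebra.toSubmodule A₀).map (LinearMap.mulLeft R (u : A))
      = (Subalgebra.toSubmodule A₀).map (LinearMap.mulRight R (u : A)))
  (hcp : IsCompl (Subalgebra.toSubmodule A₀)
      ((Subalgebra.toSubmodule A₀).map (LinearMap.mulRight R (u : A))))
include hsw hcp

lemma hcp' : IsCompl (Subalgebra.toSubmodule A₀)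
    ((Subalgebra.toSubmodule A₀).map (LinearMap.mulLeft R (u : A))) := hsw ▸ hcp

/-- even projection -/
noncomputable def pp (a : A) : A₀ :=
  ⟨((Subalgebra.toSubmodule A₀).linearProjOfIsCompl _ (hcp' hsw hcp) a : A),
    ((Subalgebra.toSubmodule A₀).linearProjOfIsCompl _ (hcp' hsw hcp) a).2⟩

/-- odd projection -/
noncomputable def qq (a : A) : A₀ :=
  ⟨((u⁻¹ : Aˣ) : A) *
    ((((Subalgebra.toSubmodule A₀).map (LinearMap.mulLeft R (u : A))).linearProjOfIsCompl
      _ (hcp' hsw hcp).symm a : A)), by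
    obtain ⟨y, hy, h⟩ := (((Subalgebra.toSubmodule A₀).map
      (LinearMap.mulLeft R (u : A))).linearProjOfIsCompl _ (hcp' hsw hcp).symm a).2
    have h' : (u : A) * y = _ := h
    rw [← h', ← mul_assoc, Units.inv_mul, one_mul]
    exact hy⟩

lemma pp_add_u_qq (a : A) : (pp hsw hcp a : A) + (u : A) * (qq hsw hcp a : A) = a := by
  show _ + (u:A) * (((u⁻¹ : Aˣ) : A) * _) = a
  rw [← mul_assoc, Units.mul_inv, one_mul]
  exact Submodule.projection_add_projection_eq_self (hcp' hsw hcp) a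

lemma pp_spec (x y : A₀) : pp hsw hcp ((x : A) + (u : A) * (y : A)) = x := by
  apply Subtype.ext
  show ((Subalgebra.toSubmodule A₀).linearProjOfIsCompl _ (hcp' hsw hcp) _ : A) = _
  rw [map_add]
  have h1 : (Subalgebra.toSubmodule A₀).linearProjOfIsCompl _ (hcp' hsw hcp) (x : A)
      = ⟨(x : A), x.2⟩ :=
    Submodule.linearProjOfIsCompl_apply_left (hcp' hsw hcp) ⟨(x : A), x.2⟩
  have h2 : (Subalgebra.toSubmodule A₀).linearProjOfIsCompl _ (hcp' hsw hcp) ((u : A) * (y : A))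
      = 0 :=
    Submodule.projectionOnto_apply_of_mem_right (hcp' hsw hcp) ⟨y, y.2, rfl⟩
  rw [h1, h2, add_zero]

lemma qq_spec (x y : A₀) : qq hsw hcp ((x : A) + (u : A) * (y : A)) = y := by
  apply Subtype.ext
  show ((u⁻¹ : Aˣ) : A) * _ = _
  rw [map_add]
  have h1 : (((Subalgebra.toSubmodule A₀).map (LinearMap.mulLeft R (u : A))).linearProjOfIsCompl
      _ (hcp' hsw hcp).symm (x : A)) = 0 :=
    Submodule.projectionOnto_apply_of_mem_right (hcp' hsw hcp).symm x.2
  have h2 : (((Subalgebra.toSubmodule A₀).map (LinearMap.mulLeft R (u : A))).linearProjOfIsCompl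
      _ (hcp' hsw hcp).symm ((u : A) * (y : A))) = ⟨(u : A) * (y : A), ⟨y, y.2, rfl⟩⟩ :=
    Submodule.linearProjOfIsCompl_apply_left (hcp' hsw hcp).symm ⟨(u : A) * (y : A), ⟨y, y.2, rfl⟩⟩
  rw [h1, h2]
  push_cast
  rw [zero_add, ← mul_assoc, Units.inv_mul, one_mul]

lemma pp_add (a b : A) : pp hsw hcp (a + b) = pp hsw hcp a + pp hsw hcp b := by
  apply Subtype.ext; show (_ : A) = _; push_cast [pp]; rw [map_add]; rfl

lemma qq_add (a b : A) : qq hsw hcp (a + b) = qq hsw hcp a + qq hsw hcp b := by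
  apply Subtype.ext; show (_ : A) = _; push_cast [qq]; rw [map_add]; push_cast; noncomm_ring

lemma pp_smul (r : R) (a : A) : pp hsw hcp (r • a) = r • pp hsw hcp a := by
  apply Subtype.ext; show (_ : A) = _; push_cast [pp]; rw [map_smul]; rfl

lemma qq_smul (r : R) (a : A) : qq hsw hcp (r • a) = r • qq hsw hcp a := by
  apply Subtype.ext; show (_ : A) = _; push_cast [qq]; rw [map_smul]
  push_cast
  rw [mul_smul_comm]

lemma pp_zero : pp hsw hcp 0 = 0 := by
  apply Subtype.ext; show (_ : A) = _; push_cast [pp]; rw [map_zero]; rfl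

lemma qq_zero : qq hsw hcp 0 = 0 := by
  apply Subtype.ext; show (_ : A) = _; push_cast [qq]; rw [map_zero]; push_cast; rw [mul_zero]

lemma pp_one : pp hsw hcp 1 = 1 := by
  have := pp_spec hsw hcp (1 : A₀) (0 : A₀)
  simpa using this

lemma qq_one : qq hsw hcp 1 = 0 := by
  have := qq_spec hsw hcp (1 : A₀) (0 : A₀)
  simpa using this

lemma pp_u : pp hsw hcp (u : A) = 0 := by
  have := pp_spec hsw hcp (0 : A₀) (1 : A₀)
  simpa using this

lemma qq_u : qq hsw hcp (u : A) = 1 := by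
  have := qq_spec hsw hcp (0 : A₀) (1 : A₀)
  simpa using this

lemma pp_mem (x : A₀) : pp hsw hcp (x : A) = x := by
  have := pp_spec hsw hcp x (0 : A₀)
  simpa using this

lemma qq_mem (x : A₀) : qq hsw hcp (x : A) = 0 := by
  have := qq_spec hsw hcp x (0 : A₀)
  simpa using this

section mul
variable (husq : (u : A) * (u : A) ∈ A₀)

lemma pp_mul (a b : A) : pp hsw hcp (a * b)
    = pp hsw hcp a * pp hsw hcp b
      + (⟨(u : A) * (u : A), husq⟩ * cj hsw (qq hsw hcp a)) * qq hsw hcp b := by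
  have key : a * b
      = ((pp hsw hcp a * pp hsw hcp b
          + (⟨(u : A) * (u : A), husq⟩ * cj hsw (qq hsw hcp a)) * qq hsw hcp b : A₀) : A)
        + (u : A) * ((cj hsw (pp hsw hcp a) * qq hsw hcp b + qq hsw hcp a * pp hsw hcp b : A₀) : A) := by
    conv_lhs => rw [← pp_add_u_qq hsw hcp a, ← pp_add_u_qq hsw hcp b]
    push_cast
    rw [mul_add, add_mul, add_mul]
    have h1 : (pp hsw hcp a : A) * ((u : A) * (qq hsw hcp b : A))
        = (u : A) * ((cj hsw (pp hsw hcp a) : A) * (qq hsw hcp b : A)) := by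
      rw [← mul_assoc, ← mul_assoc, u_mul_cj]
    have h2 : ((u : A) * (qq hsw hcp a : A)) * ((u : A) * (qq hsw hcp b : A))
        = ((u : A) * (u : A)) * ((cj hsw (qq hsw hcp a) : A) * (qq hsw hcp b : A)) := by
      have : (qq hsw hcp a : A) * (u : A) = (u : A) * (cj hsw (qq hsw hcp a) : A) :=
        (u_mul_cj hsw _).symm
      calc ((u : A) * (qq hsw hcp a : A)) * ((u : A) * (qq hsw hcp b : A))
          = (u : A) * (((qq hsw hcp a : A) * (u : A)) * (qq hsw hcp b : A)) := by noncomm_ring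
        _ = (u : A) * (((u : A) * (cj hsw (qq hsw hcp a) : A)) * (qq hsw hcp b : A)) := by rw [this]
        _ = _ := by noncomm_ring
    have h3 : ((u : A) * (qq hsw hcp a : A)) * (pp hsw hcp b : A)
        = (u : A) * ((qq hsw hcp a : A) * (pp hsw hcp b : A)) := by noncomm_ring
    rw [h1, h2, h3]
    noncomm_ring
  conv_lhs => rw [key]
  exact pp_spec hsw hcp _ _

include husq in
lemma qq_mul (a b : A) : qq hsw hcp (a * b)
    = cj hsw (pp hsw hcp a) * qq hsw hcp b + qq hsw hcp a * pp hsw hcp b := by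
  have key : a * b
      = ((pp hsw hcp a * pp hsw hcp b
          + (⟨(u : A) * (u : A), husq⟩ * cj hsw (qq hsw hcp a)) * qq hsw hcp b : A₀) : A)
        + (u : A) * ((cj hsw (pp hsw hcp a) * qq hsw hcp b + qq hsw hcp a * pp hsw hcp b : A₀) : A) := by
    conv_lhs => rw [← pp_add_u_qq hsw hcp a, ← pp_add_u_qq hsw hcp b]
    push_cast
    rw [mul_add, add_mul, add_mul]
    have h1 : (pp hsw hcp a : A) * ((u : A) * (qq hsw hcp b : A))
        = (u : A) * ((cj hsw (pp hsw hcp a) : A) * (qq hsw hcp b : A)) := by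
      rw [← mul_assoc, ← mul_assoc, u_mul_cj]
    have h2 : ((u : A) * (qq hsw hcp a : A)) * ((u : A) * (qq hsw hcp b : A))
        = ((u : A) * (u : A)) * ((cj hsw (qq hsw hcp a) : A) * (qq hsw hcp b : A)) := by
      have : (qq hsw hcp a : A) * (u : A) = (u : A) * (cj hsw (qq hsw hcp a) : A) :=
        (u_mul_cj hsw _).symm
      calc ((u : A) * (qq hsw hcp a : A)) * ((u : A) * (qq hsw hcp b : A))
          = (u : A) * (((qq hsw hcp a : A) * (u : A)) * (qq hsw hcp b : A)) := by noncomm_ring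
        _ = (u : A) * (((u : A) * (cj hsw (qq hsw hcp a) : A)) * (qq hsw hcp b : A)) := by rw [this]
        _ = _ := by noncomm_ring
    have h3 : ((u : A) * (qq hsw hcp a : A)) * (pp hsw hcp b : A)
        = (u : A) * ((qq hsw hcp a : A) * (pp hsw hcp b : A)) := by noncomm_ring
    rw [h1, h2, h3]
    noncomm_ring
  conv_lhs => rw [key]
  exact qq_spec hsw hcp _ _

lemma usq_mul_cj_cj (x : A₀) :
    (⟨(u : A) * (u : A), husq⟩ : A₀) * cj hsw (cj hsw x) = x * ⟨(u : A) * (u : A), husq⟩ := by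
  apply Subtype.ext
  push_cast [cj_coe]
  have hz : ∀ z : A, (u : A) * (((u⁻¹ : Aˣ) : A) * z) = z := fun z => by
    rw [← mul_assoc, Units.mul_inv, one_mul]
  calc ((u:A) * (u:A)) * (((u⁻¹ : Aˣ) : A) * (((u⁻¹ : Aˣ) : A) * (x:A) * (u:A)) * (u:A))
      = (u:A) * ((u:A) * (((u⁻¹ : Aˣ) : A) * ((((u⁻¹ : Aˣ) : A) * (x:A) * (u:A)) * (u:A)))) := by
        noncomm_ring
    _ = (u:A) * ((((u⁻¹ : Aˣ) : A) * (x:A) * (u:A)) * (u:A)) := by rw [hz]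
    _ = (u:A) * (((u⁻¹ : Aˣ) : A) * ((x:A) * ((u:A) * (u:A)))) := by noncomm_ring
    _ = (x:A) * ((u:A) * (u:A)) := by rw [hz]

lemma cj_usq : cj hsw (⟨(u : A) * (u : A), husq⟩ : A₀) = ⟨(u : A) * (u : A), husq⟩ := by
  apply Subtype.ext
  push_cast [cj_coe]
  calc ((u⁻¹ : Aˣ) : A) * ((u:A) * (u:A)) * (u:A)
      = (((u⁻¹ : Aˣ) : A) * (u:A)) * ((u:A) * (u:A)) := by noncomm_ring
    _ = (u:A) * (u:A) := by rw [Units.inv_mul, one_mul]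

include husq in
lemma usq_inv_mem : ((u⁻¹ : Aˣ) : A) * ((u⁻¹ : Aˣ) : A) ∈ A₀ := by
  have h := pp_add_u_qq hsw hcp (((u⁻¹ : Aˣ) : A) * ((u⁻¹ : Aˣ) : A))
  set a₀ := pp hsw hcp (((u⁻¹ : Aˣ) : A) * ((u⁻¹ : Aˣ) : A)) with ha₀
  set a₁ := qq hsw hcp (((u⁻¹ : Aˣ) : A) * ((u⁻¹ : Aˣ) : A)) with ha₁
  have hz : ∀ z : A, (u : A) * (((u⁻¹ : Aˣ) : A) * z) = z := fun z => by
    rw [← mul_assoc, Units.mul_inv, one_mul]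
  have h1 : (1 : A) = ((⟨(u:A)*(u:A), husq⟩ * a₀ : A₀) : A)
      + (u : A) * ((⟨(u:A)*(u:A), husq⟩ * a₁ : A₀) : A) := by
    push_cast
    have : ((u:A) * (u:A)) * ((a₀ : A) + (u:A) * (a₁ : A)) = 1 := by
      rw [h]
      calc ((u:A) * (u:A)) * (((u⁻¹ : Aˣ) : A) * ((u⁻¹ : Aˣ) : A))
          = (u:A) * ((u:A) * (((u⁻¹ : Aˣ) : A) * ((u⁻¹ : Aˣ) : A))) := by noncomm_ring
        _ = (u:A) * ((u⁻¹ : Aˣ) : A) := by rw [hz]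
        _ = 1 := Units.mul_inv u
    calc (1 : A) = ((u:A) * (u:A)) * ((a₀ : A) + (u:A) * (a₁ : A)) := this.symm
      _ = ((u:A) * (u:A)) * (a₀ : A) + (u:A) * (((u:A) * (u:A)) * (a₁ : A)) := by noncomm_ring
  have h2 : (⟨(u:A)*(u:A), husq⟩ * a₁ : A₀) = 0 := by
    have := qq_spec hsw hcp (⟨(u:A)*(u:A), husq⟩ * a₀ : A₀) (⟨(u:A)*(u:A), husq⟩ * a₁ : A₀)
    rw [← h1] at this
    rw [← this, qq_one]
  have h3 : (a₁ : A) = 0 := by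
    have h2' : ((u:A) * (u:A)) * (a₁ : A) = 0 := congrArg Subtype.val h2
    have : (u:A) * ((u:A) * (a₁ : A)) = 0 := by rw [← mul_assoc]; exact h2'
    rw [Units.mul_right_eq_zero] at this
    rwa [Units.mul_right_eq_zero] at this
  have : ((u⁻¹ : Aˣ) : A) * ((u⁻¹ : Aˣ) : A) = (a₀ : A) := by
    rw [← h, h3, mul_zero, add_zero]
  rw [this]; exact a₀.2

section module
variable {M : Type} [AddCommGroup M] [Module R M] [Module A₀ M] [IsScalarTower R A₀ M]

/-- the `A`-action on `M × M` -/
noncomputable def asmul (a : A) (vw : M × M) : M × M :=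
  (pp hsw hcp a • vw.1 + ((⟨(u:A)*(u:A), husq⟩ : A₀) * cj hsw (qq hsw hcp a)) • vw.2,
   qq hsw hcp a • vw.1 + cj hsw (pp hsw hcp a) • vw.2)

lemma usq_smul_cj_cj (x : A₀) (m : M) :
    ((⟨(u:A)*(u:A), husq⟩ : A₀)) • cj hsw (cj hsw x) • m
      = x • ((⟨(u:A)*(u:A), husq⟩ : A₀)) • m := by
  rw [← mul_smul, ← mul_smul, usq_mul_cj_cj hsw hcp husq]

lemma asmul_one (vw : M × M) : asmul hsw hcp husq 1 vw = vw := by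
  simp [asmul, pp_one, qq_one, cj_one, cj_zero]

lemma asmul_mul (a b : A) (vw : M × M) :
    asmul hsw hcp husq (a * b) vw = asmul hsw hcp husq a (asmul hsw hcp husq b vw) := by
  obtain ⟨v, w⟩ := vw
  simp only [asmul, pp_mul hsw hcp husq, qq_mul hsw hcp husq, cj_add, cj_mul, cj_usq hsw hcp husq,
    add_smul, mul_smul, smul_add, usq_smul_cj_cj hsw hcp husq]
  rw [Prod.mk.injEq]
  constructor <;> abel

lemma asmul_add (a : A) (vw vw' : M × M) :
    asmul hsw hcp husq a (vw + vw') = asmul hsw hcp husq a vw + asmul hsw hcp husq a vw' := by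
  simp only [asmul, Prod.fst_add, Prod.snd_add, smul_add, Prod.mk_add_mk]
  rw [Prod.mk.injEq]
  constructor <;> abel

lemma asmul_zero (a : A) : asmul hsw hcp husq a (0 : M × M) = 0 := by
  simp [asmul]

lemma add_asmul (a b : A) (vw : M × M) :
    asmul hsw hcp husq (a + b) vw = asmul hsw hcp husq a vw + asmul hsw hcp husq b vw := by
  simp only [asmul, pp_add, qq_add, cj_add, mul_add, add_smul, Prod.mk_add_mk]
  rw [Prod.mk.injEq]
  constructor <;> abel

lemma zero_asmul (vw : M × M) : asmul hsw hcp husq (0 : A) vw = 0 := by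
  simp [asmul, pp_zero, qq_zero, cj_zero]

lemma smul_asmul (r : R) (a : A) (vw : M × M) :
    asmul hsw hcp husq (r • a) vw = r • asmul hsw hcp husq a vw := by
  simp only [asmul, pp_smul, qq_smul, cj_smul, Prod.smul_mk, smul_add, mul_smul_comm,
    smul_assoc]

lemma asmul_mem (x : A₀) (vw : M × M) :
    asmul hsw hcp husq ((x : A₀) : A) vw = (x • vw.1, cj hsw x • vw.2) := by
  simp [asmul, pp_mem, qq_mem, cj_zero]

lemma asmul_u (vw : M × M) :
    asmul hsw hcp husq ((u : Aˣ) : A) vw = ((⟨(u:A)*(u:A), husq⟩ : A₀) • vw.2, vw.1) := by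
  simp [asmul, pp_u, qq_u, cj_one, cj_zero]

/-- the `A`-module structure on `M × M` -/
noncomputable def superModule : Module A (M × M) :=
  letI : SMul A (M × M) := ⟨asmul hsw hcp husq⟩
  { one_smul := asmul_one hsw hcp husq
    mul_smul := asmul_mul hsw hcp husq
    smul_zero := asmul_zero hsw hcp husq
    smul_add := asmul_add hsw hcp husq
    add_smul := add_asmul hsw hcp husq
    zero_smul := zero_asmul hsw hcp husq }

end module
end mul
end proj
end S7


theorem statement7
    (R : Type) [CommRing R] (R' : Type) [CommRing R'] [Algebra R R']
    (A : Type) [Ring A] [Algebra R A]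
    (A₀ : Subalgebra R A) (u : Aˣ)
    -- `A = A₀ ⊕ A₀u` as `R`-modules
    (hA_compl : IsCompl (Subalgebra.toSubmodule A₀)
      ((Subalgebra.toSubmodule A₀).map (LinearMap.mulRight R (u : A))))
    -- `u·A₀ = A₀·u`
    (hA_swap : (Subalgebra.toSubmodule A₀).map (LinearMap.mulLeft R (u : A))
      = (Subalgebra.toSubmodule A₀).map (LinearMap.mulRight R (u : A)))
    -- `u² ∈ A₀`
    (hu_sq : (u : A) * (u : A) ∈ A₀)
    -- `U'` is a module over `A' := R' ⊗[R] A`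
    (U' : Type) [AddCommGroup U'] [Module R' U'] [Module (R' ⊗[R] A) U']
    [IsScalarTower R' (R' ⊗[R] A) U']
    -- `U'₀, U'₁` are `A'₀`-submodules of `U'`, where `A'₀` is the image of `R' ⊗ A₀` in `A'`
    (U'₀ U'₁ : Submodule R' U')
    (hU'₀ : ∀ z ∈ (Subalgebra.toSubmodule A₀).baseChange R', ∀ w ∈ U'₀, z • w ∈ U'₀)
    (hU'₁ : ∀ z ∈ (Subalgebra.toSubmodule A₀).baseChange R', ∀ w ∈ U'₁, z • w ∈ U'₁)
    -- `U' = U'₀ ⊕ U'₁`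
    (hU'_compl : IsCompl U'₀ U'₁)
    -- `u'·U'₀ ⊆ U'₁` and `u'·U'₁ ⊆ U'₀`, where `u' := 1 ⊗ u`
    (hu'01 : ∀ w ∈ U'₀, (((1 : R') ⊗ₜ[R] (u : A) : R' ⊗[R] A)) • w ∈ U'₁)
    (hu'10 : ∀ w ∈ U'₁, (((1 : R') ⊗ₜ[R] (u : A) : R' ⊗[R] A)) • w ∈ U'₀)
    -- hypothesis: `U'₀` descends to `R` as an `A₀`-module, i.e. there are an `A₀`-module `U₀`
    -- and an `A'₀`-linear isomorphism `R' ⊗[R] U₀ ≅ U'₀`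
    (hdesc : ∃ (W : ModuleOverWitness R A₀) (e : (R' ⊗[R] W.carrier) ≃ₗ[R'] U'₀),
        ∀ (x y : R') (a : A₀) (v : W.carrier),
          ((e ((x * y) ⊗ₜ[R] (a • v)) : U'₀) : U')
            = ((x ⊗ₜ[R] (a : A) : R' ⊗[R] A)) • ((e (y ⊗ₜ[R] v) : U'₀) : U')) :
    -- conclusion: `U'` descends to `R` as an `A`-supermodule, compatibly with the gradings
    ∃ (W : ModuleWitness R A) (V₀ V₁ : Submodule R W.carrier)
      (g : (R' ⊗[R] W.carrier) ≃ₗ[R'] U'),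
      -- `V₀` and `V₁` are `A₀`-submodules of `U`
      (∀ a ∈ A₀, ∀ v ∈ V₀, a • v ∈ V₀) ∧
      (∀ a ∈ A₀, ∀ v ∈ V₁, a • v ∈ V₁) ∧
      -- `U = V₀ ⊕ V₁`
      IsCompl V₀ V₁ ∧
      -- `u·V₀ ⊆ V₁` and `u·V₁ ⊆ V₀`
      (∀ v ∈ V₀, (u : A) • v ∈ V₁) ∧
      (∀ v ∈ V₁, (u : A) • v ∈ V₀) ∧
      -- `g` is an isomorphism of `A'`-modules `R' ⊗[R] U ≅ U'`
      (∀ (x y : R') (a : A) (v : W.carrier),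
          g ((x * y) ⊗ₜ[R] (a • v)) = ((x ⊗ₜ[R] a : R' ⊗[R] A)) • g (y ⊗ₜ[R] v)) ∧
      -- `g` carries the image of `R' ⊗ V₀` onto `U'₀` and the image of `R' ⊗ V₁` onto `U'₁`
      Submodule.map g.toLinearMap (V₀.baseChange R') = U'₀ ∧
      Submodule.map g.toLinearMap (V₁.baseChange R') = U'₁ := by
  classical
  obtain ⟨W₀, e, he⟩ := hdesc
  -- abbreviations
  set M := W₀.carrier with hMdef
  letI : Module A (M × M) := S7.superModule hA_swap hA_compl hu_sq
  haveI : IsScalarTower R A (M × M) :=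
    ⟨fun r a vw => S7.smul_asmul hA_swap hA_compl hu_sq r a vw⟩
  have hsmul_def : ∀ (a : A) (vw : M × M), a • vw = S7.asmul hA_swap hA_compl hu_sq a vw :=
    fun a vw => rfl
  set u' : R' ⊗[R] A := (1 : R') ⊗ₜ[R] ((u : Aˣ) : A) with hu'
  set v' : R' ⊗[R] A := (1 : R') ⊗ₜ[R] ((u⁻¹ : Aˣ) : A) with hv'
  have hcomm : ∀ (r : R') (z : R' ⊗[R] A) (x : U'), z • (r • x) = r • (z • x) := by
    intro r z x
    rw [← algebraMap_smul (R' ⊗[R] A) r x, ← mul_smul, ← Algebra.commutes, mul_smul,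
      algebraMap_smul]
  have hvu : ∀ x : U', v' • u' • x = x := by
    intro x
    rw [← mul_smul, hv', hu', Algebra.TensorProduct.tmul_mul_tmul, one_mul, Units.inv_mul,
      ← Algebra.TensorProduct.one_def, one_smul]
  have huv : ∀ x : U', u' • v' • x = x := by
    intro x
    rw [← mul_smul, hv', hu', Algebra.TensorProduct.tmul_mul_tmul, one_mul, Units.mul_inv,
      ← Algebra.TensorProduct.one_def, one_smul]
  have hv'mem : ∀ x ∈ U'₁, v' • x ∈ U'₀ := by
    intro x hx
    have h1 : v' = ((1 : R') ⊗ₜ[R] (((u⁻¹ : Aˣ) : A) * ((u⁻¹ : Aˣ) : A))) * u' := by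
      rw [hu', hv', Algebra.TensorProduct.tmul_mul_tmul, one_mul, mul_assoc, Units.inv_mul,
        mul_one]
    rw [h1, mul_smul]
    refine hU'₀ _ ?_ _ (hu'10 x hx)
    exact Submodule.tmul_mem_baseChange_of_mem _
      (S7.usq_inv_mem hA_swap hA_compl hu_sq)
  -- the odd equivalence
  let uEq : U'₀ ≃ₗ[R'] U'₁ :=
    { toFun := fun w => ⟨u' • (w : U'), hu'01 _ w.2⟩
      invFun := fun w => ⟨v' • (w : U'), hv'mem _ w.2⟩
      left_inv := fun w => Subtype.ext (hvu _)
      right_inv := fun w => Subtype.ext (huv _)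
      map_add' := fun w₁ w₂ => Subtype.ext (by simp [smul_add])
      map_smul' := fun r w => Subtype.ext (by simpa using hcomm r u' (w : U')) }
  have uEq_coe : ∀ w : U'₀, (uEq w : U') = u' • (w : U') := fun w => rfl
  let f₁ : (R' ⊗[R] M) ≃ₗ[R'] U'₁ := e.trans uEq
  let psum : (U'₀ × U'₁) ≃ₗ[R'] U' := Submodule.prodEquivOfIsCompl U'₀ U'₁ hU'_compl
  let fwd : (R' ⊗[R] (M × M)) →ₗ[R'] (R' ⊗[R] M) × (R' ⊗[R] M) :=
    (LinearMap.baseChange R' (LinearMap.fst R M M)).prod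
      (LinearMap.baseChange R' (LinearMap.snd R M M))
  let bwd : (R' ⊗[R] M) × (R' ⊗[R] M) →ₗ[R'] R' ⊗[R] (M × M) :=
    LinearMap.coprod (LinearMap.baseChange R' (LinearMap.inl R M M))
      (LinearMap.baseChange R' (LinearMap.inr R M M))
  have hb1 : ∀ s : R' ⊗[R] M,
      (LinearMap.inl R M M).baseChange R' s ∈ (Submodule.fst R M M).baseChange R'
        ∧ fwd ((LinearMap.inl R M M).baseChange R' s) = (s, 0) := by
    intro s
    induction s using TensorProduct.induction_on with
    | zero => simp; rfl
    | tmul r m =>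
        constructor
        · rw [LinearMap.baseChange_tmul]
          exact Submodule.tmul_mem_baseChange_of_mem _ (by simp [Submodule.fst])
        · simp [fwd]
    | add a b ha hb =>
        refine ⟨?_, ?_⟩
        · rw [map_add]; exact Submodule.add_mem _ ha.1 hb.1
        · rw [map_add, map_add, ha.2, hb.2]; simp
  have hb2 : ∀ s : R' ⊗[R] M,
      (LinearMap.inr R M M).baseChange R' s ∈ (Submodule.snd R M M).baseChange R'
        ∧ fwd ((LinearMap.inr R M M).baseChange R' s) = (0, s) := by
    intro s
    induction s using TensorProduct.induction_on with
    | zero => simp; rfl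
    | tmul r m =>
        constructor
        · rw [LinearMap.baseChange_tmul]
          exact Submodule.tmul_mem_baseChange_of_mem _ (by simp [Submodule.snd])
        · simp [fwd]
    | add a b ha hb =>
        refine ⟨?_, ?_⟩
        · rw [map_add]; exact Submodule.add_mem _ ha.1 hb.1
        · rw [map_add, map_add, ha.2, hb.2]; simp
  have hfwd_bwd : ∀ st : (R' ⊗[R] M) × (R' ⊗[R] M), fwd (bwd st) = st := by
    rintro ⟨s, t⟩
    show fwd ((LinearMap.inl R M M).baseChange R' s + (LinearMap.inr R M M).baseChange R' t) = _
    rw [map_add, (hb1 s).2, (hb2 t).2]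
    simp
  have hbwd_fwd : ∀ t : R' ⊗[R] (M × M), bwd (fwd t) = t := by
    intro t
    induction t using TensorProduct.induction_on with
    | zero => simp
    | tmul r vw =>
        obtain ⟨v, w⟩ := vw
        show (LinearMap.inl R M M).baseChange R' (r ⊗ₜ[R] v)
          + (LinearMap.inr R M M).baseChange R' (r ⊗ₜ[R] w) = _
        rw [LinearMap.baseChange_tmul, LinearMap.baseChange_tmul, ← TensorProduct.tmul_add]
        simp
    | add a b ha hb => rw [map_add, map_add, ha, hb]
  let pRR : (R' ⊗[R] (M × M)) ≃ₗ[R'] (R' ⊗[R] M) × (R' ⊗[R] M) :=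
    LinearEquiv.ofLinear fwd bwd (LinearMap.ext hfwd_bwd) (LinearMap.ext hbwd_fwd)
  let g : (R' ⊗[R] (M × M)) ≃ₗ[R'] U' := pRR.trans ((e.prodCongr f₁).trans psum)
  have hpRR_tmul : ∀ (r : R') (vw : M × M), pRR (r ⊗ₜ[R] vw) = (r ⊗ₜ[R] vw.1, r ⊗ₜ[R] vw.2) :=
    fun r vw => rfl
  have hg_tmul : ∀ (r : R') (vw : M × M),
      g (r ⊗ₜ[R] vw) = ((e (r ⊗ₜ[R] vw.1) : U'₀) : U')
        + u' • ((e (r ⊗ₜ[R] vw.2) : U'₀) : U') := by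
    intro r vw
    show psum ((e.prodCongr f₁) (pRR (r ⊗ₜ[R] vw))) = _
    rw [hpRR_tmul]
    rfl
  have hg_symm : ∀ st : (R' ⊗[R] M) × (R' ⊗[R] M),
      g (pRR.symm st) = ((e st.1 : U'₀) : U') + ((f₁ st.2 : U'₁) : U') := by
    intro st
    show psum ((e.prodCongr f₁) (pRR (pRR.symm st))) = _
    rw [LinearEquiv.apply_symm_apply]
    rfl
  have hpRR_symm : ∀ st : (R' ⊗[R] M) × (R' ⊗[R] M), pRR.symm st = bwd st := fun st => rfl
  have hmem_fst : ∀ x : M × M, x ∈ Submodule.fst R M M ↔ x.2 = 0 := fun x => by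
    simp [Submodule.fst]
  have hmem_snd : ∀ x : M × M, x ∈ Submodule.snd R M M ↔ x.1 = 0 := fun x => by
    simp [Submodule.snd]
  refine ⟨⟨M × M⟩, Submodule.fst R M M, Submodule.snd R M M, g, ?_, ?_, ?_, ?_, ?_, ?_, ?_, ?_⟩
  · -- A₀-stability of V₀
    intro a ha vw hvw
    rw [hmem_fst] at hvw ⊢
    rw [hsmul_def]
    have h := S7.asmul_mem hA_swap hA_compl hu_sq (⟨a, ha⟩ : A₀) (vw : M × M)
    rw [h]
    simp [hvw]
  · intro a ha vw hvw
    rw [hmem_snd] at hvw ⊢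
    rw [hsmul_def]
    have h := S7.asmul_mem hA_swap hA_compl hu_sq (⟨a, ha⟩ : A₀) (vw : M × M)
    rw [h]
    simp [hvw]
  · exact IsCompl.of_eq (Submodule.fst_inf_snd R M M) (Submodule.fst_sup_snd R M M)
  · intro vw hvw
    rw [hmem_fst] at hvw
    rw [hmem_snd, hsmul_def, S7.asmul_u hA_swap hA_compl hu_sq]
    simp [hvw]
  · intro vw hvw
    rw [hmem_snd] at hvw
    rw [hmem_fst, hsmul_def, S7.asmul_u hA_swap hA_compl hu_sq]
    simp [hvw]
  · -- A'-linearity of g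
    intro x y a vw
    obtain ⟨v, w⟩ := vw
    set pa := S7.pp hA_swap hA_compl a with hpa
    set qa := S7.qq hA_swap hA_compl a with hqa
    set usq : A₀ := (⟨(u : A) * (u : A), hu_sq⟩ : A₀) with husq'
    have hdec : a • ((v, w) : M × M)
        = ((pa • v + (usq * S7.cj hA_swap qa) • w,
            qa • v + S7.cj hA_swap pa • w) : M × M) := rfl
    rw [hdec, hg_tmul, hg_tmul]
    rw [TensorProduct.tmul_add, TensorProduct.tmul_add, map_add, map_add,
      Submodule.coe_add, Submodule.coe_add, smul_add]
    rw [show ((x * y) ⊗ₜ[R] ((pa : A₀) • v) : R' ⊗[R] M) = (x * y) ⊗ₜ[R] ((pa : A₀) • v) from rfl]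
    rw [he x y pa v, he x y (usq * S7.cj hA_swap qa) w, he x y qa v, he x y (S7.cj hA_swap pa) w]
    set E₀ : U' := ((e (y ⊗ₜ[R] v) : U'₀) : U') with hE₀
    set E₁ : U' := ((e (y ⊗ₜ[R] w) : U'₀) : U') with hE₁
    have ha' : a = (pa : A) + (u : A) * (qa : A) :=
      (S7.pp_add_u_qq hA_swap hA_compl a).symm
    have hx1 : (x ⊗ₜ[R] a : R' ⊗[R] A) • E₀
        = (x ⊗ₜ[R] ((pa : A₀) : A)) • E₀ + u' • ((x ⊗ₜ[R] ((qa : A₀) : A)) • E₀) := by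
      conv_lhs => rw [ha']
      rw [TensorProduct.tmul_add, add_smul]
      congr 1
      rw [show (x ⊗ₜ[R] ((u : A) * (qa : A)) : R' ⊗[R] A)
          = u' * (x ⊗ₜ[R] ((qa : A₀) : A)) from by
        rw [hu', Algebra.TensorProduct.tmul_mul_tmul, one_mul], mul_smul]
    have hx2 : (x ⊗ₜ[R] a : R' ⊗[R] A) • (u' • E₁)
        = u' • ((x ⊗ₜ[R] ((S7.cj hA_swap pa : A₀) : A)) • E₁)
          + (x ⊗ₜ[R] (((usq * S7.cj hA_swap qa : A₀)) : A)) • E₁ := by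
      rw [← mul_smul, hu', Algebra.TensorProduct.tmul_mul_tmul, mul_one]
      have hau : a * (u : A) = (u : A) * (S7.cj hA_swap pa : A)
          + ((u : A) * (u : A)) * (S7.cj hA_swap qa : A) := by
        conv_lhs => rw [ha']
        rw [add_mul, S7.u_mul_cj hA_swap pa]
        congr 1
        rw [mul_assoc, ← S7.u_mul_cj hA_swap qa, ← mul_assoc]
      rw [hau, TensorProduct.tmul_add, add_smul]
      congr 1
      · rw [show (x ⊗ₜ[R] ((u : A) * (S7.cj hA_swap pa : A)) : R' ⊗[R] A)
            = u' * (x ⊗ₜ[R] ((S7.cj hA_swap pa : A₀) : A)) from by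
          rw [hu', Algebra.TensorProduct.tmul_mul_tmul, one_mul], mul_smul]
    rw [smul_add, hx1, hx2]
    abel
  · -- V₀ ↦ U'₀
    apply le_antisymm
    · rw [Submodule.baseChange_eq_span, Submodule.map_span]
      rw [Submodule.span_le]
      rintro - ⟨-, ⟨vw, hvw, rfl⟩, rfl⟩
      have hvw' : vw.2 = 0 := (hmem_fst vw).mp hvw
      show g ((1 : R') ⊗ₜ[R] vw) ∈ (U'₀ : Set U')
      rw [hg_tmul, hvw']
      simp
    · intro z hz
      refine ⟨pRR.symm (e.symm ⟨z, hz⟩, 0), ?_, ?_⟩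
      · rw [hpRR_symm]
        show LinearMap.coprod _ _ _ ∈ _
        rw [LinearMap.coprod_apply, map_zero, add_zero]
        exact (hb1 _).1
      · show g (pRR.symm (e.symm ⟨z, hz⟩, 0)) = z
        rw [hg_symm]
        simp
  · -- V₁ ↦ U'₁
    apply le_antisymm
    · rw [Submodule.baseChange_eq_span, Submodule.map_span]
      rw [Submodule.span_le]
      rintro - ⟨-, ⟨vw, hvw, rfl⟩, rfl⟩
      have hvw' : vw.1 = 0 := (hmem_snd vw).mp hvw
      show g ((1 : R') ⊗ₜ[R] vw) ∈ (U'₁ : Set U')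
      rw [hg_tmul, hvw']
      simp only [TensorProduct.tmul_zero, map_zero, Submodule.coe_zero, zero_add]
      exact hu'01 _ (e ((1:R') ⊗ₜ[R] vw.2)).2
  -- membership
    · intro z hz
      refine ⟨pRR.symm (0, f₁.symm ⟨z, hz⟩), ?_, ?_⟩
      · rw [hpRR_symm]
        show LinearMap.coprod _ _ _ ∈ _
        rw [LinearMap.coprod_apply, map_zero, zero_add]
        exact (hb2 _).1
      · show g (pRR.symm (0, f₁.symm ⟨z, hz⟩)) = z
        rw [hg_symm]
        simp
end
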